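/- Let $\mathbb{D}_\Phi$ be the set of cumulative distribution functions of non-degenerate probability measures on $[0,1]$, and for $F \in \mathbb{D}_\Phi$ define $(\Phi(F))(w) = F(w) - (\mu_F - 1/2)\sigma_F^{-2} \int_{[0,w]}(v-\mu_F)\, dF(v)$, where $\mu_F$ and $\sigma_F^2>0$ are the mean and variance of $F$. If $F_n, F \in \mathbb{D}_\Phi$ and $\|F_n - F\|_\infty \to 0$, then $\|\Phi(F_n) - \Phi(F)\|_\infty \to 0$; i.e., $\Phi : \mathbb{D}_\Phi \to \ell^\infty([0,1])$ is continuous at every $F \in \mathbb{D}_\Phi$ with respect to the supremum norm. -/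

import Mathlib

open MeasureTheory Set Filter Topology

set_option linter.unusedVariables false
set_option linter.unusedSectionVars false

/-- The distribution function of a measure. -/
noncomputable def cdf01 (μ : Measure ℝ) (w : ℝ) : ℝ := (μ (Iic w)).toReal

/-- The mean of a measure supported on `[0,1]`. -/
noncomputable def mean01 (μ : Measure ℝ) : ℝ := ∫ v in Icc (0:ℝ) 1, v ∂μ

/-- The variance of a measure supported on `[0,1]`. -/
noncomputable def var01 (μ : Measure ℝ) : ℝ :=
  ∫ v in Icc (0:ℝ) 1, (v - mean01 μ)^2 ∂μ

/-- The map `Φ`: `(Φ(F))(w) = F(w) - (μ_F - 1/2) σ_F⁻² ∫_{[0,w]} (v - μ_F) dF(v)`. -/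
noncomputable def PhiMap (μ : Measure ℝ) (w : ℝ) : ℝ :=
  cdf01 μ w - (mean01 μ - 1/2) / var01 μ * ∫ v in Icc (0:ℝ) w, (v - mean01 μ) ∂μ

variable {μ : Measure ℝ} [IsProbabilityMeasure μ]

lemma cdf01_mono (μ : Measure ℝ) [IsProbabilityMeasure μ] : Monotone (cdf01 μ) :=
  fun _ _ hab => ENNReal.toReal_mono (measure_ne_top μ _) (measure_mono (Iic_subset_Iic.2 hab))

lemma cdf01_nonneg (μ : Measure ℝ) (w : ℝ) : 0 ≤ cdf01 μ w := ENNReal.toReal_nonneg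

lemma cdf01_le_one (μ : Measure ℝ) [IsProbabilityMeasure μ] (w : ℝ) : cdf01 μ w ≤ 1 := by
  have := prob_le_one (μ := μ) (s := Iic w)
  simpa [cdf01] using ENNReal.toReal_mono (by simp) this

lemma cdf01_meas (μ : Measure ℝ) [IsProbabilityMeasure μ] : Measurable (cdf01 μ) :=
  (cdf01_mono μ).measurable

lemma cdf01_one (μ : Measure ℝ) [IsProbabilityMeasure μ] (hs : μ (Icc (0:ℝ) 1)ᶜ = 0) :
    cdf01 μ 1 = 1 := by
  have h : μ (Iic 1)ᶜ = 0 := by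
    apply measure_mono_null _ hs
    intro x hx
    simp only [mem_compl_iff, mem_Iic, not_le, mem_Icc, not_and] at hx ⊢
    intro; linarith
  have := measure_add_measure_compl (μ := μ) (s := Iic (1:ℝ)) measurableSet_Iic
  rw [h, add_zero] at this
  simp [cdf01, this]

lemma cdf01_intOn (μ : Measure ℝ) [IsProbabilityMeasure μ] (s : Set ℝ) (hs : volume s ≠ ⊤) :
    IntegrableOn (cdf01 μ) s := by
  haveI : IsFiniteMeasure (volume.restrict s) :=
    ⟨by rwa [Measure.restrict_apply_univ, lt_top_iff_ne_top]⟩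
  apply Integrable.mono' (integrable_const (1:ℝ)) ((cdf01_mono μ).measurable.aestronglyMeasurable)
  refine Eventually.of_forall fun t => ?_
  rw [Real.norm_eq_abs, abs_of_nonneg (cdf01_nonneg μ t)]
  exact cdf01_le_one μ t

lemma meas_Ioc (t w : ℝ) (htw : t ≤ w) : (μ (Ioc t w)).toReal = cdf01 μ w - cdf01 μ t := by
  have h1 : Ioc t w = Iic w \ Iic t := by ext x; simp [mem_Ioc, and_comm]
  rw [h1, measure_diff (Iic_subset_Iic.2 htw) measurableSet_Iic.nullMeasurableSet (measure_ne_top μ _),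
    ENNReal.toReal_sub_of_le (measure_mono (Iic_subset_Iic.2 htw)) (measure_ne_top μ _)]
  rfl

lemma layercake_v (hs : μ (Icc (0:ℝ) 1)ᶜ = 0) {w : ℝ} (hw : w ∈ Icc (0:ℝ) 1) :
    ∫ v in Icc (0:ℝ) w, v ∂μ = ∫ t in Ioc (0:ℝ) w, (cdf01 μ w - cdf01 μ t) := by
  set ν := μ.restrict (Icc (0:ℝ) w) with hν
  have hmem : ∀ᵐ v ∂ν, v ∈ Icc (0:ℝ) w := ae_restrict_mem measurableSet_Icc
  have f_intble : Integrable (fun v => v) ν := by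
    apply Integrable.mono' (integrable_const (1:ℝ)) measurable_id.aestronglyMeasurable
    filter_upwards [hmem] with v hv
    simp only [id_eq, Real.norm_eq_abs]
    rw [abs_of_nonneg hv.1]
    exact hv.2.trans hw.2
  have f_nn : 0 ≤ᵐ[ν] (fun v => v) := by filter_upwards [hmem] with v hv using hv.1
  rw [show (∫ v in Icc (0:ℝ) w, v ∂μ) = ∫ v, v ∂ν from rfl,
    f_intble.integral_eq_integral_meas_lt f_nn]
  have key : ∀ t ∈ Ioi (0:ℝ), ν.real {a | t < a} = (μ (Ioc t w)).toReal := by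
    intro t ht
    have h0 : {a : ℝ | t < a} = Ioi t := rfl
    have hset : Ioi t ∩ Icc (0:ℝ) w = Ioc t w := by
      ext x
      simp only [mem_inter_iff, mem_Ioi, mem_Icc, mem_Ioc]
      exact ⟨fun ⟨h1, _, h3⟩ => ⟨h1, h3⟩, fun ⟨h1, h2⟩ => ⟨h1, le_of_lt (lt_trans ht h1), h2⟩⟩
    rw [measureReal_def, h0, hν, Measure.restrict_apply measurableSet_Ioi, hset]
  rw [setIntegral_congr_fun measurableSet_Ioi key,
    setIntegral_eq_of_subset_of_ae_diff_eq_zero nullMeasurableSet_Ioi Ioc_subset_Ioi_self ?_]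
  · apply setIntegral_congr_fun measurableSet_Ioc
    intro t ht
    exact meas_Ioc t w ht.2
  · refine Eventually.of_forall fun t ht => ?_
    have : w < t := by
      simp only [mem_diff, mem_Ioi, mem_Ioc, not_and, not_le] at ht
      exact ht.2 ht.1
    rw [Ioc_eq_empty (by linarith), measure_empty]
    simp

lemma layercake_v2 (hs : μ (Icc (0:ℝ) 1)ᶜ = 0) :
    ∫ v in Icc (0:ℝ) 1, v^2 ∂μ = ∫ t in Ioc (0:ℝ) 1, (1 - cdf01 μ (Real.sqrt t)) := by
  set ν := μ.restrict (Icc (0:ℝ) 1) with hν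
  have hmem : ∀ᵐ v ∂ν, v ∈ Icc (0:ℝ) 1 := ae_restrict_mem measurableSet_Icc
  have f_intble : Integrable (fun v => v^2) ν := by
    apply Integrable.mono' (integrable_const (1:ℝ))
      (measurable_id.pow_const 2).aestronglyMeasurable
    filter_upwards [hmem] with v hv
    simp only [id_eq, Real.norm_eq_abs]
    rw [abs_of_nonneg (sq_nonneg v)]
    nlinarith [hv.1, hv.2]
  have f_nn : 0 ≤ᵐ[ν] (fun v => v^2) := Eventually.of_forall fun v => sq_nonneg v
  rw [show (∫ v in Icc (0:ℝ) 1, v^2 ∂μ) = ∫ v, v^2 ∂ν from rfl,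
    f_intble.integral_eq_integral_meas_lt f_nn]
  have key : ∀ t ∈ Ioi (0:ℝ), ν.real {a | t < a^2} = (μ (Ioc (Real.sqrt t) 1)).toReal := by
    intro t ht
    have ht' : (0:ℝ) < t := ht
    rw [measureReal_def, hν, Measure.restrict_apply]
    swap
    · exact measurableSet_lt measurable_const (measurable_id.pow_const 2)
    have hset : {a : ℝ | t < a^2} ∩ Icc (0:ℝ) 1 = Ioc (Real.sqrt t) 1 := by
      ext x
      simp only [mem_inter_iff, mem_setOf_eq, mem_Icc, mem_Ioc]
      constructor
      · rintro ⟨h1, h2, h3⟩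
        refine ⟨?_, h3⟩
        rcases eq_or_lt_of_le h2 with h | h
        · exfalso; nlinarith [ht']
        · exact (Real.sqrt_lt' h).2 h1
      · rintro ⟨h1, h2⟩
        have hx0 : 0 < x := lt_of_le_of_lt (Real.sqrt_nonneg t) h1
        exact ⟨(Real.sqrt_lt' hx0).1 h1, le_of_lt hx0, h2⟩
    rw [hset]
  rw [setIntegral_congr_fun measurableSet_Ioi key,
    setIntegral_eq_of_subset_of_ae_diff_eq_zero nullMeasurableSet_Ioi Ioc_subset_Ioi_self ?_]
  · apply setIntegral_congr_fun measurableSet_Ioc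
    intro t ht
    dsimp only
    have hst : Real.sqrt t ≤ 1 := Real.sqrt_le_one.mpr ht.2
    rw [meas_Ioc _ 1 hst, cdf01_one μ hs]
  · refine Eventually.of_forall fun t ht => ?_
    have h1t : (1:ℝ) < t := by
      simp only [mem_diff, mem_Ioi, mem_Ioc, not_and, not_le] at ht
      exact ht.2 ht.1
    have : (1:ℝ) < Real.sqrt t := by
      rw [show (1:ℝ) = Real.sqrt 1 from (Real.sqrt_one).symm]
      exact Real.sqrt_lt_sqrt zero_le_one h1t
    rw [Ioc_eq_empty (by linarith), measure_empty]
    simp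

lemma int_id_restrict {w : ℝ} (hw : w ∈ Icc (0:ℝ) 1) :
    Integrable (fun v => v) (μ.restrict (Icc (0:ℝ) w)) := by
  apply Integrable.mono' (integrable_const (1:ℝ)) measurable_id.aestronglyMeasurable
  filter_upwards [ae_restrict_mem measurableSet_Icc] with v hv
  simp only [id_eq, Real.norm_eq_abs]
  rw [abs_of_nonneg hv.1]
  exact hv.2.trans hw.2

lemma int_sq_restrict : Integrable (fun v => v^2) (μ.restrict (Icc (0:ℝ) 1)) := by
  apply Integrable.mono' (integrable_const (1:ℝ))
    (measurable_id.pow_const 2).aestronglyMeasurable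
  filter_upwards [ae_restrict_mem measurableSet_Icc] with v hv
  simp only [id_eq, Real.norm_eq_abs]
  rw [abs_of_nonneg (sq_nonneg v)]
  nlinarith [hv.1, hv.2]

lemma meas_Icc_cdf (hs : μ (Icc (0:ℝ) 1)ᶜ = 0) {w : ℝ} (hw : 0 ≤ w) :
    (μ (Icc (0:ℝ) w)).toReal = cdf01 μ w := by
  have hIio : μ (Iio (0:ℝ)) = 0 := by
    apply measure_mono_null _ hs
    intro x hx
    simp only [mem_Iio] at hx
    simp only [mem_compl_iff, mem_Icc, not_and]
    intro; linarith
  have : Iic w = Icc (0:ℝ) w ∪ Iio 0 := by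
    ext x
    simp only [mem_Iic, mem_union, mem_Icc, mem_Iio]
    constructor
    · intro h
      rcases le_or_gt 0 x with h0 | h0
      · exact Or.inl ⟨h0, h⟩
      · exact Or.inr h0
    · rintro (⟨_, h⟩ | h)
      · exact h
      · linarith
  have h2 : μ (Icc (0:ℝ) w ∪ Iio 0) = μ (Icc (0:ℝ) w) :=
    le_antisymm ((measure_union_le _ _).trans (by rw [hIio, add_zero]))
      (measure_mono subset_union_left)
  rw [cdf01, this, h2]

lemma ioc_int_const {w : ℝ} (hw : 0 ≤ w) (c : ℝ) : ∫ _t in Ioc (0:ℝ) w, c = w * c := by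
  rw [setIntegral_const]
  simp [Real.volume_Ioc, hw, smul_eq_mul]

lemma mean01_eq (hs : μ (Icc (0:ℝ) 1)ᶜ = 0) :
    mean01 μ = 1 - ∫ t in Ioc (0:ℝ) 1, cdf01 μ t := by
  rw [mean01, layercake_v hs (by norm_num : (1:ℝ) ∈ Icc (0:ℝ) 1),
    integral_sub (integrableOn_const (by simp [Real.volume_Ioc])).integrable
      (cdf01_intOn μ _ (by simp [Real.volume_Ioc])),
    ioc_int_const zero_le_one, cdf01_one μ hs]
  ring

lemma mean01_mem (hs : μ (Icc (0:ℝ) 1)ᶜ = 0) : mean01 μ ∈ Icc (0:ℝ) 1 := by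
  have h1 : μ (Icc (0:ℝ) 1) = 1 := by
    have := measure_add_measure_compl (μ := μ) (s := Icc (0:ℝ) 1) measurableSet_Icc
    rw [hs, add_zero] at this
    simp [this]
  constructor
  · exact setIntegral_nonneg measurableSet_Icc fun x hx => hx.1
  · calc mean01 μ ≤ ∫ _v in Icc (0:ℝ) 1, (1:ℝ) ∂μ := by
          apply setIntegral_mono_on (int_id_restrict (by norm_num)) (integrable_const 1)
            measurableSet_Icc
          intro x hx; exact hx.2
      _ = 1 := by rw [setIntegral_const, measureReal_def, h1]; simp

lemma intsub_eq (hs : μ (Icc (0:ℝ) 1)ᶜ = 0) {w : ℝ} (hw : w ∈ Icc (0:ℝ) 1) :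
    ∫ v in Icc (0:ℝ) w, (v - mean01 μ) ∂μ
      = (w - mean01 μ) * cdf01 μ w - ∫ t in Ioc (0:ℝ) w, cdf01 μ t := by
  rw [integral_sub (int_id_restrict hw) (integrable_const _), layercake_v hs hw,
    integral_sub (integrableOn_const (by simp [Real.volume_Ioc, hw.1])).integrable
      (cdf01_intOn μ _ (by simp [Real.volume_Ioc])),
    ioc_int_const hw.1, integral_const, measureReal_def, Measure.restrict_apply_univ, meas_Icc_cdf hs hw.1,
    smul_eq_mul]
  ring

lemma var01_eq (hs : μ (Icc (0:ℝ) 1)ᶜ = 0) :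
    var01 μ = (∫ t in Ioc (0:ℝ) 1, (1 - cdf01 μ (Real.sqrt t))) - (mean01 μ)^2 := by
  have h1 : μ (Icc (0:ℝ) 1) = 1 := by
    have := measure_add_measure_compl (μ := μ) (s := Icc (0:ℝ) 1) measurableSet_Icc
    rw [hs, add_zero] at this
    simp [this]
  set m := mean01 μ with hm
  have e : ∀ v : ℝ, (v - m)^2 = v^2 - (2*m)*v + m^2 := fun v => by ring
  rw [var01]
  calc ∫ v in Icc (0:ℝ) 1, (v - m)^2 ∂μ
      = ∫ v in Icc (0:ℝ) 1, (v^2 - (2*m)*v + m^2) ∂μ := by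
        exact integral_congr_ae (Eventually.of_forall fun v => e v)
    _ = (∫ v in Icc (0:ℝ) 1, (v^2 - (2*m)*v) ∂μ) + ∫ _v in Icc (0:ℝ) 1, (m^2:ℝ) ∂μ := by
        apply integral_add (Integrable.sub int_sq_restrict
          ((int_id_restrict (by norm_num)).const_mul (2*m))) (integrable_const _)
    _ = ((∫ v in Icc (0:ℝ) 1, v^2 ∂μ) - (2*m) * ∫ v in Icc (0:ℝ) 1, v ∂μ) + m^2 := by
        rw [integral_sub int_sq_restrict ((int_id_restrict (by norm_num)).const_mul (2*m)),
          integral_const_mul, setIntegral_const, measureReal_def, h1]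
        simp
    _ = (∫ t in Ioc (0:ℝ) 1, (1 - cdf01 μ (Real.sqrt t))) - m^2 := by
        rw [layercake_v2 hs, ← mean01, ← hm]
        ring

lemma PhiMap_eq (hs : μ (Icc (0:ℝ) 1)ᶜ = 0) {w : ℝ} (hw : w ∈ Icc (0:ℝ) 1) :
    PhiMap μ w = cdf01 μ w - (mean01 μ - 1/2) / var01 μ *
      ((w - mean01 μ) * cdf01 μ w - ∫ t in Ioc (0:ℝ) w, cdf01 μ t) := by
  rw [PhiMap, intsub_eq hs hw]

lemma sqrt_comp_intOn (μ : Measure ℝ) [IsProbabilityMeasure μ] :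
    IntegrableOn (fun t => 1 - cdf01 μ (Real.sqrt t)) (Ioc (0:ℝ) 1) := by
  haveI : IsFiniteMeasure (volume.restrict (Ioc (0:ℝ) 1)) :=
    ⟨by rw [Measure.restrict_apply_univ]; simp [Real.volume_Ioc]⟩
  apply Integrable.mono' (integrable_const (1:ℝ))
    ((measurable_const.sub ((cdf01_mono μ).measurable.comp
      Real.continuous_sqrt.measurable)).aestronglyMeasurable)
  refine Eventually.of_forall fun t => ?_
  simp only [Pi.sub_apply, Function.comp_apply]
  rw [Real.norm_eq_abs, abs_le]
  constructor
  · have := cdf01_le_one μ (Real.sqrt t); linarith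
  · have := cdf01_nonneg μ (Real.sqrt t); linarith

lemma tendsto_integral_cdf (μn : ℕ → Measure ℝ) (μ : Measure ℝ)
    [∀ n, IsProbabilityMeasure (μn n)] [IsProbabilityMeasure μ]
    (hconv : TendstoUniformlyOn (fun n w => cdf01 (μn n) w) (cdf01 μ) atTop (Icc (0:ℝ) 1)) :
    Tendsto (fun n => ∫ t in Ioc (0:ℝ) 1, cdf01 (μn n) t) atTop
      (𝓝 (∫ t in Ioc (0:ℝ) 1, cdf01 μ t)) := by
  rw [Metric.tendsto_atTop]
  intro ε hε
  have h2 := (Metric.tendstoUniformlyOn_iff.mp hconv) (ε/2) (by positivity)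
  rw [eventually_atTop] at h2
  obtain ⟨N, hN⟩ := h2
  refine ⟨N, fun n hn => ?_⟩
  rw [Real.dist_eq, ← integral_sub (cdf01_intOn (μn n) _ (by simp [Real.volume_Ioc]))
    (cdf01_intOn μ _ (by simp [Real.volume_Ioc]))]
  calc |∫ t in Ioc (0:ℝ) 1, (cdf01 (μn n) t - cdf01 μ t)|
      ≤ (ε/2) * (volume (Ioc (0:ℝ) 1)).toReal := by
        rw [← Real.norm_eq_abs]
        apply norm_setIntegral_le_of_norm_le_const (by simp [Real.volume_Ioc])
        intro t ht
        rw [Real.norm_eq_abs, abs_sub_comm, ← Real.dist_eq]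
        exact le_of_lt (hN n hn t ⟨le_of_lt ht.1, ht.2⟩)
    _ < ε := by simp [Real.volume_Ioc]; linarith

lemma tendsto_integral_cdf_sqrt (μn : ℕ → Measure ℝ) (μ : Measure ℝ)
    [∀ n, IsProbabilityMeasure (μn n)] [IsProbabilityMeasure μ]
    (hconv : TendstoUniformlyOn (fun n w => cdf01 (μn n) w) (cdf01 μ) atTop (Icc (0:ℝ) 1)) :
    Tendsto (fun n => ∫ t in Ioc (0:ℝ) 1, (1 - cdf01 (μn n) (Real.sqrt t))) atTop
      (𝓝 (∫ t in Ioc (0:ℝ) 1, (1 - cdf01 μ (Real.sqrt t)))) := by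
  rw [Metric.tendsto_atTop]
  intro ε hε
  have h2 := (Metric.tendstoUniformlyOn_iff.mp hconv) (ε/2) (by positivity)
  rw [eventually_atTop] at h2
  obtain ⟨N, hN⟩ := h2
  refine ⟨N, fun n hn => ?_⟩
  rw [Real.dist_eq, ← integral_sub (sqrt_comp_intOn (μn n)) (sqrt_comp_intOn μ)]
  calc |∫ t in Ioc (0:ℝ) 1, ((1 - cdf01 (μn n) (Real.sqrt t)) - (1 - cdf01 μ (Real.sqrt t)))|
      ≤ (ε/2) * (volume (Ioc (0:ℝ) 1)).toReal := by
        rw [← Real.norm_eq_abs]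
        apply norm_setIntegral_le_of_norm_le_const (by simp [Real.volume_Ioc])
        intro t ht
        have hst : Real.sqrt t ∈ Icc (0:ℝ) 1 :=
          ⟨Real.sqrt_nonneg t, Real.sqrt_le_one.mpr ht.2⟩
        rw [Real.norm_eq_abs, show (1 - cdf01 (μn n) (Real.sqrt t)) - (1 - cdf01 μ (Real.sqrt t))
          = cdf01 μ (Real.sqrt t) - cdf01 (μn n) (Real.sqrt t) by ring, ← Real.dist_eq]
        exact le_of_lt (hN n hn _ hst)
    _ < ε := by simp [Real.volume_Ioc]; linarith

lemma abs_est (a b m mn c cn J Jn w δ : ℝ) (hδ : 0 < δ) (hδ1 : δ ≤ 1)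
    (ha : 0 ≤ a) (ha1 : a ≤ 1) (hw0 : 0 ≤ w) (hw1 : w ≤ 1)
    (hm : 0 ≤ m) (hm1 : m ≤ 1) (hmn : 0 ≤ mn) (hmn1 : mn ≤ 1)
    (hJb : |J| ≤ 1) (dab : |a - b| ≤ δ) (dm : |mn - m| ≤ δ) (dc : |cn - c| ≤ δ)
    (dJ : |J - Jn| ≤ δ) :
    |(a - c*((w - m)*a - J)) - (b - cn*((w - mn)*b - Jn))| ≤ (3*|c| + 6) * δ := by
  have hH : |((w - m)*a - J) - ((w - mn)*b - Jn)| ≤ 3*δ := by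
    have e : ((w - m)*a - J) - ((w - mn)*b - Jn)
        = (w - mn)*(a - b) + (mn - m)*a + (Jn - J) := by ring
    rw [e]
    have b1 : |(w - mn)*(a - b)| ≤ 1*δ := by
      rw [abs_mul]
      apply mul_le_mul _ dab (abs_nonneg _) zero_le_one
      rw [abs_le]; constructor <;> linarith
    have b2 : |(mn - m)*a| ≤ δ*1 := by
      rw [abs_mul]
      apply mul_le_mul dm _ (abs_nonneg _) (le_of_lt hδ)
      rw [abs_le]; constructor <;> linarith
    have b3 : |Jn - J| ≤ δ := by rw [abs_sub_comm]; exact dJ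
    calc |(w - mn)*(a - b) + (mn - m)*a + (Jn - J)|
        ≤ |(w - mn)*(a - b) + (mn - m)*a| + |Jn - J| := abs_add_le _ _
      _ ≤ |(w - mn)*(a - b)| + |(mn - m)*a| + |Jn - J| := by
          have := abs_add_le ((w - mn)*(a - b)) ((mn - m)*a); linarith
      _ ≤ 3*δ := by linarith
  have hHb : |(w - m)*a - J| ≤ 2 := by
    have h0 : |(w - m)*a| ≤ 1 := by
      rw [abs_mul]
      have h1 : |w - m| ≤ 1 := by rw [abs_le]; constructor <;> linarith
      have h2 : |a| ≤ 1 := by rw [abs_le]; constructor <;> linarith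
      calc |w - m| * |a| ≤ 1*1 := mul_le_mul h1 h2 (abs_nonneg _) zero_le_one
        _ = 1 := by ring
    calc |(w - m)*a - J| ≤ |(w - m)*a| + |J| := abs_sub _ _
      _ ≤ 2 := by linarith
  have hcn : |cn| ≤ |c| + 1 := by
    calc |cn| = |c + (cn - c)| := by rw [show c + (cn - c) = cn from by ring]
      _ ≤ |c| + |cn - c| := abs_add_le _ _
      _ ≤ |c| + 1 := by linarith
  have e2 : (a - c*((w - m)*a - J)) - (b - cn*((w - mn)*b - Jn))
      = (a - b) - (cn*(((w - m)*a - J) - ((w - mn)*b - Jn)) + (c - cn)*((w - m)*a - J)) := by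
    ring
  rw [e2]
  have t2 : |cn*(((w - m)*a - J) - ((w - mn)*b - Jn))| ≤ (|c|+1)*(3*δ) := by
    rw [abs_mul]; exact mul_le_mul hcn hH (abs_nonneg _) (by positivity)
  have t3 : |(c - cn)*((w - m)*a - J)| ≤ δ*2 := by
    rw [abs_mul]
    exact mul_le_mul (by rw [abs_sub_comm]; exact dc) hHb (abs_nonneg _) (le_of_lt hδ)
  calc |(a - b) - (cn*(((w - m)*a - J) - ((w - mn)*b - Jn)) + (c - cn)*((w - m)*a - J))|
      ≤ |a - b| + |cn*(((w - m)*a - J) - ((w - mn)*b - Jn)) + (c - cn)*((w - m)*a - J)| :=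
        abs_sub _ _
    _ ≤ |a - b| + (|cn*(((w - m)*a - J) - ((w - mn)*b - Jn))| + |(c - cn)*((w - m)*a - J)|) := by
        have := abs_add_le (cn*(((w - m)*a - J) - ((w - mn)*b - Jn))) ((c - cn)*((w - m)*a - J))
        linarith
    _ ≤ (3*|c| + 6) * δ := by nlinarith [abs_nonneg c, hδ.le]

/-- `Φ` is continuous with respect to the supremum norm on `[0,1]`. -/
theorem PhiMap_continuous
    (μn : ℕ → Measure ℝ) (μ : Measure ℝ)
    [∀ n, IsProbabilityMeasure (μn n)] [IsProbabilityMeasure μ]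
    (hsn : ∀ n, μn n (Icc (0:ℝ) 1)ᶜ = 0) (hs : μ (Icc (0:ℝ) 1)ᶜ = 0)
    (hvarn : ∀ n, 0 < var01 (μn n)) (hvar : 0 < var01 μ)
    (hconv : TendstoUniformlyOn (fun n w => cdf01 (μn n) w) (cdf01 μ) atTop (Icc (0:ℝ) 1)) :
    TendstoUniformlyOn (fun n w => PhiMap (μn n) w) (PhiMap μ) atTop (Icc (0:ℝ) 1) := by
  have hm : Tendsto (fun n => mean01 (μn n)) atTop (𝓝 (mean01 μ)) := by
    have e : (fun n => mean01 (μn n)) = fun n => 1 - ∫ t in Ioc (0:ℝ) 1, cdf01 (μn n) t :=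
      funext fun n => mean01_eq (hsn n)
    rw [e, mean01_eq hs]
    exact tendsto_const_nhds.sub (tendsto_integral_cdf μn μ hconv)
  have hv : Tendsto (fun n => var01 (μn n)) atTop (𝓝 (var01 μ)) := by
    have e : (fun n => var01 (μn n)) = fun n =>
        (∫ t in Ioc (0:ℝ) 1, (1 - cdf01 (μn n) (Real.sqrt t))) - (mean01 (μn n))^2 :=
      funext fun n => var01_eq (hsn n)
    rw [e, var01_eq hs]
    exact (tendsto_integral_cdf_sqrt μn μ hconv).sub (hm.pow 2)
  have hc : Tendsto (fun n => (mean01 (μn n) - 1/2) / var01 (μn n)) atTop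
      (𝓝 ((mean01 μ - 1/2) / var01 μ)) :=
    (hm.sub tendsto_const_nhds).div hv (ne_of_gt hvar)
  rw [Metric.tendstoUniformlyOn_iff]
  intro ε hε
  have hK : (0:ℝ) < 3*|(mean01 μ - 1/2) / var01 μ| + 6 := by positivity
  set K := 3*|(mean01 μ - 1/2) / var01 μ| + 6 with hKdef
  set δ := min 1 (ε/(2*K)) with hδdef
  have hδ : 0 < δ := lt_min one_pos (by positivity)
  have hδ1 : δ ≤ 1 := min_le_left _ _
  have hδ2 : δ ≤ ε/(2*K) := min_le_right _ _
  have h1 := (Metric.tendstoUniformlyOn_iff.mp hconv) δ hδ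
  have h2 := (Metric.tendsto_nhds.mp hm) δ hδ
  have h3 := (Metric.tendsto_nhds.mp hc) δ hδ
  filter_upwards [h1, h2, h3] with n hn1 hn2 hn3
  intro w hw
  rw [Real.dist_eq, PhiMap_eq hs hw, PhiMap_eq (hsn n) hw]
  have hJb : |∫ t in Ioc (0:ℝ) w, cdf01 μ t| ≤ 1 := by
    rw [← Real.norm_eq_abs]
    calc ‖∫ t in Ioc (0:ℝ) w, cdf01 μ t‖ ≤ 1 * (volume (Ioc (0:ℝ) w)).toReal := by
          apply norm_setIntegral_le_of_norm_le_const (by simp [Real.volume_Ioc])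
          intro t _
          rw [Real.norm_eq_abs, abs_of_nonneg (cdf01_nonneg μ t)]
          exact cdf01_le_one μ t
      _ ≤ 1 := by
          rw [one_mul, Real.volume_Ioc, ENNReal.toReal_ofReal (by linarith [hw.1])]
          linarith [hw.2]
  have dJ : |(∫ t in Ioc (0:ℝ) w, cdf01 μ t) - ∫ t in Ioc (0:ℝ) w, cdf01 (μn n) t| ≤ δ := by
    rw [← integral_sub (cdf01_intOn μ _ (by simp [Real.volume_Ioc]))
      (cdf01_intOn (μn n) _ (by simp [Real.volume_Ioc])), ← Real.norm_eq_abs]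
    calc ‖∫ t in Ioc (0:ℝ) w, (cdf01 μ t - cdf01 (μn n) t)‖
        ≤ δ * (volume (Ioc (0:ℝ) w)).toReal := by
          apply norm_setIntegral_le_of_norm_le_const (by simp [Real.volume_Ioc])
          intro t ht
          rw [Real.norm_eq_abs, ← Real.dist_eq]
          exact le_of_lt (hn1 t ⟨le_of_lt ht.1, ht.2.trans hw.2⟩)
      _ ≤ δ := by
          rw [Real.volume_Ioc, ENNReal.toReal_ofReal (by linarith [hw.1])]
          nlinarith [hw.1, hw.2, hδ.le]
  have key := abs_est (cdf01 μ w) (cdf01 (μn n) w) (mean01 μ) (mean01 (μn n))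
    ((mean01 μ - 1/2) / var01 μ) ((mean01 (μn n) - 1/2) / var01 (μn n))
    (∫ t in Ioc (0:ℝ) w, cdf01 μ t) (∫ t in Ioc (0:ℝ) w, cdf01 (μn n) t) w δ hδ hδ1
    (cdf01_nonneg μ w) (cdf01_le_one μ w) hw.1 hw.2
    (mean01_mem hs).1 (mean01_mem hs).2 (mean01_mem (hsn n)).1 (mean01_mem (hsn n)).2
    hJb
    (by rw [← Real.dist_eq]; exact le_of_lt (hn1 w hw))
    (by rw [← Real.dist_eq]; exact le_of_lt hn2)
    (by rw [← Real.dist_eq]; exact le_of_lt hn3)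
    dJ
  calc |(cdf01 μ w - (mean01 μ - 1/2) / var01 μ *
          ((w - mean01 μ) * cdf01 μ w - ∫ t in Ioc (0:ℝ) w, cdf01 μ t)) -
        (cdf01 (μn n) w - (mean01 (μn n) - 1/2) / var01 (μn n) *
          ((w - mean01 (μn n)) * cdf01 (μn n) w - ∫ t in Ioc (0:ℝ) w, cdf01 (μn n) t))|
      ≤ K * δ := key
    _ ≤ K * (ε/(2*K)) := by
        apply mul_le_mul_of_nonneg_left hδ2 (le_of_lt hK)
    _ < ε := by
        have hKne : K ≠ 0 := ne_of_gt hK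
        have he : K * (ε/(2*K)) = ε/2 := by field_simp
        rw [he]; linarith
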